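/- (Proposition 2, fixed-frequency matrix form.) Let K be an invertible real n × n matrix such that every entry of K⁻¹ is bounded in absolute value by ε, where n·ε < 1. Let b ∈ {1,…,n} and let φ < −(1 + n·ε) be real, and for β ∈ [0,1] set Φ_β = β·φ·e_b e_bᵀ. Then there exists β ∈ [0,1] such that det( I_n + K(I_n + Φ_β) ) = 0. In other words, a continuously scaled rank-one sensing-model perturbation of relative size reaching φ at mode b forces the return-difference determinant through zero, so the feedback loop is not robustly stable. -/

import Mathlib

open Matrix

/-- Sign of the determinant of a strictly row-diagonally-dominant real matrix whose
diagonal entries have signs `s i ∈ {1, -1}`: the determinant has sign `∏ i, s i`. -/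
lemma aux_det_sign {n : ℕ} (A : Matrix (Fin n) (Fin n) ℝ) (s : Fin n → ℝ)
    (hs : ∀ i, s i = 1 ∨ s i = -1)
    (hdom : ∀ i, ∑ j ∈ Finset.univ.erase i, |A i j| < s i * A i i) :
    0 < (∏ i, s i) * A.det := by
  set D : Matrix (Fin n) (Fin n) ℝ := Matrix.diagonal s with hD
  set f : ℝ → ℝ := fun t => ((1 - t) • D + t • A).det with hf
  have hcont : Continuous f :=
    Continuous.matrix_det (((continuous_const.sub continuous_id).smul continuous_const).add
      (continuous_id.smul continuous_const))
  have hs2 : ∀ i, s i * s i = 1 := fun i => by rcases hs i with h | h <;> simp [h]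
  have hsabs : ∀ i (x : ℝ), s i * x ≤ |x| := by
    intro i x
    rcases hs i with h | h
    · rw [h, one_mul]; exact le_abs_self x
    · rw [h]; simpa using neg_le_abs x
  have hne : ∀ t ∈ Set.Icc (0 : ℝ) 1, f t ≠ 0 := by
    intro t ht
    apply det_ne_zero_of_sum_row_lt_diag
    intro i
    have hentry : ∀ j ∈ Finset.univ.erase i,
        ‖((1 - t) • D + t • A) i j‖ = t * |A i j| := by
      intro j hj
      have hji : j ≠ i := Finset.ne_of_mem_erase hj
      simp [hD, Matrix.add_apply, Matrix.smul_apply, smul_eq_mul,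
        Matrix.diagonal_apply_ne' _ hji, abs_mul, abs_of_nonneg ht.1, Real.norm_eq_abs]
    rw [Finset.sum_congr rfl hentry, ← Finset.mul_sum]
    have hdiag : (1 - t) + t * (s i * A i i) ≤ ‖((1 - t) • D + t • A) i i‖ := by
      have key : s i * ((1 - t) * s i + t * A i i) = (1 - t) + t * (s i * A i i) := by
        linear_combination (1 - t) * (hs2 i)
      calc (1 - t) + t * (s i * A i i) = s i * ((1 - t) * s i + t * A i i) := key.symm
        _ ≤ |(1 - t) * s i + t * A i i| := hsabs i _
        _ = ‖((1 - t) • D + t • A) i i‖ := by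
            simp [hD, Matrix.add_apply, Matrix.smul_apply, smul_eq_mul,
              Matrix.diagonal_apply_eq, Real.norm_eq_abs]
    refine lt_of_lt_of_le ?_ hdiag
    have hu : ∑ j ∈ Finset.univ.erase i, |A i j| < s i * A i i := hdom i
    have hSnn : (0 : ℝ) ≤ ∑ j ∈ Finset.univ.erase i, |A i j| :=
      Finset.sum_nonneg fun _ _ => abs_nonneg _
    rcases eq_or_lt_of_le ht.1 with h0 | h0
    · simp [← h0]
    · nlinarith [ht.2, mul_lt_mul_of_pos_left hu h0]
  have hf0 : f 0 = ∏ i, s i := by simp [hf, hD, Matrix.det_diagonal]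
  have hf1 : f 1 = A.det := by simp [hf]
  by_contra hcon
  push_neg at hcon
  have hPne : (∏ i, s i) ≠ 0 := by
    apply Finset.prod_ne_zero_iff.2
    intro i _
    rcases hs i with h | h <;> simp [h]
  have hf1ne : f 1 ≠ 0 := hne 1 (by norm_num)
  have hlt : (∏ i, s i) * A.det < 0 := by
    rcases lt_or_eq_of_le hcon with h | h
    · exact h
    · exact absurd h (mul_ne_zero hPne (hf1 ▸ hf1ne))
  have h0mem : (0 : ℝ) ∈ Set.uIcc (f 0) (f 1) := by
    rw [hf0, hf1]
    rcases mul_neg_iff.1 hlt with ⟨h1, h2⟩ | ⟨h1, h2⟩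
    · exact Set.mem_uIcc.2 (Or.inr ⟨h2.le, h1.le⟩)
    · exact Set.mem_uIcc.2 (Or.inl ⟨h1.le, h2.le⟩)
  obtain ⟨t, ht, hft⟩ := intermediate_value_uIcc (hcont.continuousOn) h0mem
  rw [Set.uIcc_of_le (zero_le_one)] at ht
  exact hne t ht hft

/-- Proposition 2, fixed-frequency matrix form: if `K` is invertible with all entries of
`K⁻¹` bounded by `ε`, `n ε < 1`, and `φ < -(1 + n ε)`, then scaling the rank-one sensing
perturbation `Φ_β = β φ e_b e_bᵀ` from `β = 0` to `β = 1` forces the return-difference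
determinant `det (I + K (I + Φ_β))` through zero: the loop is not robustly stable. -/
theorem stmt8 (n : ℕ) (K : Matrix (Fin n) (Fin n) ℝ) (hK : IsUnit K)
    (ε : ℝ) (hε : ∀ j k, |K⁻¹ j k| ≤ ε) (hnε : (n : ℝ) * ε < 1)
    (b : Fin n) (φ : ℝ) (hφ : φ < -(1 + (n : ℝ) * ε)) :
    ∃ β ∈ Set.Icc (0 : ℝ) 1,
      (1 + K * (1 + Matrix.single b b (β * φ))).det = 0 := by
  have hεnn : 0 ≤ ε := le_trans (abs_nonneg _) (hε b b)
  have hn1 : 1 ≤ (n : ℝ) := by exact_mod_cast b.pos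
  set G : ℝ → Matrix (Fin n) (Fin n) ℝ :=
    fun β => K⁻¹ + 1 + Matrix.single b b (β * φ) with hG
  have hGeq : G = fun β : ℝ =>
      K⁻¹ + 1 + (β * φ) • Matrix.single b b (1 : ℝ) := by
    funext β
    simp [hG, Matrix.smul_single]
  have hGcont : Continuous fun β => (G β).det := by
    apply Continuous.matrix_det
    rw [hGeq]
    exact continuous_const.add ((continuous_id.mul continuous_const).smul continuous_const)
  have hEoff : ∀ (c : ℝ) (i j : Fin n), j ≠ i →
      Matrix.single b b c i j = 0 := by
    intro c i j hji
    apply Matrix.single_apply_of_ne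
    rintro ⟨rfl, rfl⟩
    exact hji rfl
  have hsum : ∀ β : ℝ, ∀ i, ∑ j ∈ Finset.univ.erase i, |G β i j| ≤ ((n : ℝ) - 1) * ε := by
    intro β i
    have hb : ∀ j ∈ Finset.univ.erase i, |G β i j| ≤ ε := by
      intro j hj
      have hji : j ≠ i := Finset.ne_of_mem_erase hj
      have : G β i j = K⁻¹ i j := by
        simp [hG, Matrix.add_apply, Matrix.one_apply_ne' hji, hEoff _ i j hji]
      rw [this]; exact hε i j
    calc ∑ j ∈ Finset.univ.erase i, |G β i j| ≤ ∑ j ∈ Finset.univ.erase i, ε :=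
          Finset.sum_le_sum hb
      _ = ((n : ℝ) - 1) * ε := by
          rw [Finset.sum_const, Finset.card_erase_of_mem (Finset.mem_univ i),
            Finset.card_univ, Fintype.card_fin, nsmul_eq_mul, Nat.cast_sub b.pos]
          norm_num
  have hG0 : 0 < (G 0).det := by
    have h := aux_det_sign (G 0) (fun _ => 1) (fun _ => Or.inl rfl) ?_
    · simpa using h
    · intro i
      have h1 : G 0 i i = K⁻¹ i i + 1 := by
        simp [hG, Matrix.add_apply, Matrix.one_apply_eq]
      refine lt_of_le_of_lt (hsum 0 i) ?_
      rw [one_mul, h1]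
      have := (abs_le.1 (hε i i)).1
      nlinarith
  have hG1 : (G 1).det < 0 := by
    set s : Fin n → ℝ := fun i => if i = b then -1 else 1 with hsdef
    have hprod : (∏ i, s i) = -1 := by
      rw [hsdef, Finset.prod_ite_eq' Finset.univ b (fun _ => (-1 : ℝ))]
      simp
    have h := aux_det_sign (G 1) s (fun i => by by_cases h : i = b <;> simp [hsdef, h]) ?_
    · rw [hprod] at h; linarith
    · intro i
      refine lt_of_le_of_lt (hsum 1 i) ?_
      by_cases h : i = b
      · subst h
        have h1 : G 1 i i = K⁻¹ i i + 1 + φ := by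
          simp [hG, Matrix.add_apply, Matrix.one_apply_eq]
        rw [h1]
        simp only [hsdef, if_pos rfl]
        have := (abs_le.1 (hε i i)).2
        nlinarith
      · have h1 : G 1 i i = K⁻¹ i i + 1 := by
          have : ∀ c : ℝ, Matrix.single b b c i i = 0 := by
            intro c
            apply Matrix.single_apply_of_ne
            rintro ⟨rfl, -⟩
            exact h rfl
          simp [hG, Matrix.add_apply, Matrix.one_apply_eq, this]
        rw [h1]
        simp only [hsdef, if_neg h, one_mul]
        have := (abs_le.1 (hε i i)).1
        nlinarith
  have h0mem : (0 : ℝ) ∈ Set.uIcc ((G 0).det) ((G 1).det) :=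
    Set.mem_uIcc.2 (Or.inr ⟨hG1.le, hG0.le⟩)
  obtain ⟨β, hβ, hβ0⟩ := intermediate_value_uIcc (hGcont.continuousOn) h0mem
  rw [Set.uIcc_of_le (zero_le_one)] at hβ
  refine ⟨β, hβ, ?_⟩
  have hdet0 : (G β).det = 0 := hβ0
  have hKK : K * K⁻¹ = 1 := Matrix.mul_nonsing_inv K ((Matrix.isUnit_iff_isUnit_det K).1 hK)
  have hfact : 1 + K * (1 + Matrix.single b b (β * φ)) = K * G β := by
    rw [hG]
    simp only [Matrix.mul_add, Matrix.mul_one, hKK]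
    rw [add_assoc]
  rw [hfact, Matrix.det_mul, hdet0, mul_zero]
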